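/- Two-lane TASEP with cross-enhanced rates (case i): suppose j¹(ρ₁,ρ₂) = j₀(ρ₁)(1+2b₁ρ₂) and j²(ρ₁,ρ₂) = j₀(ρ₂)(1+2b₂ρ₁) with b₁, b₂ ≠ 0, and the current symmetry b₂ j₀(ρ₂) ρ₁(1−ρ₁) = b₁ j₀(ρ₁) ρ₂(1−ρ₂) holds for all ρ₁, ρ₂ ∈ (0,1), where j₀ : (0,1) → ℝ is continuous and not identically zero. Then b₁ = b₂ and there exists a constant c ≠ 0 with j₀(x) = c·x(1−x) for all x ∈ (0,1). -/

import Mathlib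

theorem stmt_16 (j₀ : ℝ → ℝ) (b₁ b₂ : ℝ)
    (hb₁ : b₁ ≠ 0) (hb₂ : b₂ ≠ 0)
    (hcont : ContinuousOn j₀ (Set.Ioo 0 1))
    (hne : ∃ x ∈ Set.Ioo (0:ℝ) 1, j₀ x ≠ 0)
    (hsym : ∀ ρ₁ ∈ Set.Ioo (0:ℝ) 1, ∀ ρ₂ ∈ Set.Ioo (0:ℝ) 1,
      b₂ * j₀ ρ₂ * (ρ₁ * (1 - ρ₁)) = b₁ * j₀ ρ₁ * (ρ₂ * (1 - ρ₂))) :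
    b₁ = b₂ ∧ ∃ c : ℝ, c ≠ 0 ∧ ∀ x ∈ Set.Ioo (0:ℝ) 1, j₀ x = c * x * (1 - x) := by
  obtain ⟨x₀, hx₀, hj₀⟩ := hne
  have hκ : x₀ * (1 - x₀) ≠ 0 :=
    mul_ne_zero (ne_of_gt hx₀.1) (by linarith [hx₀.2])
  have hbeq : b₁ = b₂ := by
    have h := hsym x₀ hx₀ x₀ hx₀
    have : b₂ * (j₀ x₀ * (x₀ * (1 - x₀))) = b₁ * (j₀ x₀ * (x₀ * (1 - x₀))) := by ring_nf; linarith [h]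
    exact (mul_right_cancel₀ (mul_ne_zero hj₀ hκ) this).symm
  refine ⟨hbeq, j₀ x₀ / (x₀ * (1 - x₀)), div_ne_zero hj₀ hκ, ?_⟩
  intro x hx
  have h := hsym x₀ hx₀ x hx
  rw [hbeq] at h
  have h2 : j₀ x * (x₀ * (1 - x₀)) = j₀ x₀ * (x * (1 - x)) := by
    have := mul_left_cancel₀ hb₂ (by linarith [h] : b₂ * (j₀ x * (x₀ * (1 - x₀))) = b₂ * (j₀ x₀ * (x * (1 - x))))
    exact this
  field_simp
  rw [eq_div_iff hκ]
  linarith [h2]
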